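/- Let π₁, π₂ be PDLsf[Loop] path formulas. For every MSC M and event e such that ⟦π₁·π₂⟧_M(e) is nonempty: min_{π₁·π₂}(e) = min_{π₂}( min_{π₁·(⟨π₂⟩true)?}(e) ) and max_{π₁·π₂}(e) = max_{π₂}( max_{π₁·(⟨π₂⟩true)?}(e) ), where true is a tautological event formula. -/

import Mathlib

set_option maxHeartbeats 1000000

/-! ## Message sequence charts -/

/-- A message sequence chart (MSC) over processes `P` and labels `Lab`.
Events are natural numbers; `E` is the finite nonempty set of events. -/
structure MSC (P : Type) (Lab : Type) where
  /-- the finite set of events -/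
  E : Finset ℕ
  nonemptyE : E.Nonempty
  /-- process edges `→` (direct successor on a process) -/
  proc : ℕ → ℕ → Prop
  /-- message edges `◁` -/
  msg : ℕ → ℕ → Prop
  /-- location (process) of each event -/
  loc : ℕ → P
  /-- label of each event -/
  lab : ℕ → Lab
  proc_mem : ∀ e f, proc e f → e ∈ E ∧ f ∈ E
  msg_mem : ∀ e f, msg e f → e ∈ E ∧ f ∈ E
  proc_loc : ∀ e f, proc e f → loc e = loc f
  msg_loc : ∀ e f, msg e f → loc e ≠ loc f
  /-- on each process, any two events are comparable w.r.t. `→⁺` -/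
  proc_total : ∀ e f, e ∈ E → f ∈ E → loc e = loc f →
    e = f ∨ Relation.TransGen proc e f ∨ Relation.TransGen proc f e
  /-- `→` is the direct-successor (covering) relation of the order `→⁺` -/
  proc_cover : ∀ e f, proc e f →
    ¬ ∃ g, Relation.TransGen proc e g ∧ Relation.TransGen proc g f
  /-- every event belongs to at most one message edge -/
  msg_once : ∀ e f e' f', msg e f → msg e' f' →
    (e = e' ∨ e = f' ∨ f = e' ∨ f = f') → e = e' ∧ f = f'
  /-- FIFO condition -/
  fifo : ∀ e f e' f', msg e f → msg e' f' → loc e = loc e' → loc f = loc f' →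
    (Relation.ReflTransGen proc e e' ↔ Relation.ReflTransGen proc f f')
  /-- `→ ∪ ◁` is acyclic -/
  acyclic : ∀ e, ¬ Relation.TransGen (fun a b => proc a b ∨ msg a b) e e

namespace MSC

variable {P Lab : Type}

/-- `≤proc`, the reflexive transitive closure of `→`. -/
def procLe (M : MSC P Lab) : ℕ → ℕ → Prop := Relation.ReflTransGen M.proc

/-- `<proc`, the transitive closure of `→`. -/
def procLt (M : MSC P Lab) : ℕ → ℕ → Prop := Relation.TransGen M.proc

/-- the happened-before relation `≤ = (→ ∪ ◁)*`. -/
def hb (M : MSC P Lab) : ℕ → ℕ → Prop :=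
  Relation.ReflTransGen (fun a b => M.proc a b ∨ M.msg a b)

/-- Relabelling an MSC (same events and edges, new labelling). -/
def relabel {Γ : Type} (M : MSC P Lab) (γ : ℕ → Γ) : MSC P Γ where
  E := M.E
  nonemptyE := M.nonemptyE
  proc := M.proc
  msg := M.msg
  loc := M.loc
  lab := γ
  proc_mem := M.proc_mem
  msg_mem := M.msg_mem
  proc_loc := M.proc_loc
  msg_loc := M.msg_loc
  proc_total := M.proc_total
  proc_cover := M.proc_cover
  msg_once := M.msg_once
  fifo := M.fifo
  acyclic := M.acyclic

end MSC

/-! ## Star-free PDL -/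

mutual
/-- Event formulas of star-free PDL. -/
inductive EF (P Lab : Type) : Type where
  | proc : P → EF P Lab
  | lab : Lab → EF P Lab
  | or : EF P Lab → EF P Lab → EF P Lab
  | not : EF P Lab → EF P Lab
  | dia : PF P Lab → EF P Lab → EF P Lab
  | loop : PF P Lab → EF P Lab
/-- Path formulas of star-free PDL. -/
inductive PF (P Lab : Type) : Type where
  | next : PF P Lab
  | prev : PF P Lab
  | msg : P → P → PF P Lab
  | msgInv : P → P → PF P Lab
  | nextG : EF P Lab → PF P Lab
  | prevG : EF P Lab → PF P Lab
  | jump : P → P → PF P Lab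
  | test : EF P Lab → PF P Lab
  | comp : PF P Lab → PF P Lab → PF P Lab
  | union : PF P Lab → PF P Lab → PF P Lab
  | inter : PF P Lab → PF P Lab → PF P Lab
  | compl : PF P Lab → PF P Lab
end

mutual
/-- Satisfaction of event formulas at an event. -/
def EF.sat {P Lab : Type} (M : MSC P Lab) : EF P Lab → ℕ → Prop
  | .proc p, e => e ∈ M.E ∧ M.loc e = p
  | .lab a, e => e ∈ M.E ∧ M.lab e = a
  | .or φ ψ, e => EF.sat M φ e ∨ EF.sat M ψ e
  | .not φ, e => e ∈ M.E ∧ ¬ EF.sat M φ e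
  | .dia π φ, e => ∃ f, PF.sem M π e f ∧ EF.sat M φ f
  | .loop π, e => PF.sem M π e e
/-- Semantics of path formulas as binary relations on events. -/
def PF.sem {P Lab : Type} (M : MSC P Lab) : PF P Lab → ℕ → ℕ → Prop
  | .next, e, f => M.proc e f
  | .prev, e, f => M.proc f e
  | .msg p q, e, f => M.msg e f ∧ M.loc e = p ∧ M.loc f = q
  | .msgInv p q, e, f => M.msg f e ∧ M.loc f = p ∧ M.loc e = q
  | .nextG φ, e, f => M.procLt e f ∧ ∀ g, M.procLt e g → M.procLt g f → EF.sat M φ g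
  | .prevG φ, e, f => M.procLt f e ∧ ∀ g, M.procLt f g → M.procLt g e → EF.sat M φ g
  | .jump p r, e, f => e ∈ M.E ∧ f ∈ M.E ∧ M.loc e = p ∧ M.loc f = r
  | .test φ, e, f => e = f ∧ EF.sat M φ e
  | .comp π₁ π₂, e, f => ∃ g, PF.sem M π₁ e g ∧ PF.sem M π₂ g f
  | .union π₁ π₂, e, f => PF.sem M π₁ e f ∨ PF.sem M π₂ e f
  | .inter π₁ π₂, e, f => PF.sem M π₁ e f ∧ PF.sem M π₂ e f
  | .compl π, e, f => e ∈ M.E ∧ f ∈ M.E ∧ ¬ PF.sem M π e f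
end

/-- Sentences of star-free PDL. -/
inductive PDLS (P Lab : Type) : Type where
  | ex : EF P Lab → PDLS P Lab
  | or : PDLS P Lab → PDLS P Lab → PDLS P Lab
  | not : PDLS P Lab → PDLS P Lab

/-- Satisfaction of PDL sentences. -/
def PDLS.sat {P Lab : Type} (M : MSC P Lab) : PDLS P Lab → Prop
  | .ex φ => ∃ e ∈ M.E, EF.sat M φ e
  | .or ξ ζ => PDLS.sat M ξ ∨ PDLS.sat M ζ
  | .not ξ => ¬ PDLS.sat M ξ

/-- The four optional operators of star-free PDL. -/
inductive PDLOp : Type where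
  | loop | union | inter | compl
deriving DecidableEq

mutual
/-- `EF.inFrag R φ` : the event formula `φ` belongs to the fragment `PDLsf[R]`. -/
def EF.inFrag {P Lab : Type} (R : Set PDLOp) : EF P Lab → Prop
  | .proc _ => True
  | .lab _ => True
  | .or φ ψ => EF.inFrag R φ ∧ EF.inFrag R ψ
  | .not φ => EF.inFrag R φ
  | .dia π φ => PF.inFrag R π ∧ EF.inFrag R φ
  | .loop π => PDLOp.loop ∈ R ∧ PF.inFrag R π
/-- `PF.inFrag R π` : the path formula `π` belongs to the fragment `PDLsf[R]`. -/
def PF.inFrag {P Lab : Type} (R : Set PDLOp) : PF P Lab → Prop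
  | .next => True
  | .prev => True
  | .msg _ _ => True
  | .msgInv _ _ => True
  | .nextG φ => EF.inFrag R φ
  | .prevG φ => EF.inFrag R φ
  | .jump _ _ => True
  | .test φ => EF.inFrag R φ
  | .comp π₁ π₂ => PF.inFrag R π₁ ∧ PF.inFrag R π₂
  | .union π₁ π₂ => PDLOp.union ∈ R ∧ PF.inFrag R π₁ ∧ PF.inFrag R π₂
  | .inter π₁ π₂ => PDLOp.inter ∈ R ∧ PF.inFrag R π₁ ∧ PF.inFrag R π₂
  | .compl π => PDLOp.compl ∈ R ∧ PF.inFrag R π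
end

/-- `PDLS.inFrag R ξ` : the sentence `ξ` belongs to the fragment `PDLsf[R]`. -/
def PDLS.inFrag {P Lab : Type} (R : Set PDLOp) : PDLS P Lab → Prop
  | .ex φ => EF.inFrag R φ
  | .or ξ ζ => PDLS.inFrag R ξ ∧ PDLS.inFrag R ζ
  | .not ξ => PDLS.inFrag R ξ

/-- Conjunction of event formulas (derived operator). -/
def EF.and {P Lab : Type} (φ ψ : EF P Lab) : EF P Lab :=
  .not (.or (.not φ) (.not ψ))

/-- `isMinOf M π e m` : `m` is the `≤proc`-least element of `⟦π⟧_M(e)`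
(in particular `⟦π⟧_M(e)` is nonempty). -/
def isMinOf {P Lab : Type} (M : MSC P Lab) (π : PF P Lab) (e m : ℕ) : Prop :=
  PF.sem M π e m ∧ ∀ f, PF.sem M π e f → M.procLe m f

/-- `isMaxOf M π e m` : `m` is the `≤proc`-greatest element of `⟦π⟧_M(e)`
(in particular `⟦π⟧_M(e)` is nonempty). -/
def isMaxOf {P Lab : Type} (M : MSC P Lab) (π : PF P Lab) (e m : ℕ) : Prop :=
  PF.sem M π e m ∧ ∀ f, PF.sem M π e f → M.procLe f m

/-! ## MSO/FO logic over MSCs -/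

/-- Formulas of MSO over MSCs: first-order kernel with atoms `p(x)`, `a(x)`,
`x = y`, `x → y`, `x ◁ y`, `x ≤ y` and additionally `x ∈ X_k` (monadic
second-order variables, used for the EMSO prefix). -/
inductive FOS (P Lab : Type) : Type where
  | pred : P → ℕ → FOS P Lab
  | lab : Lab → ℕ → FOS P Lab
  | eq : ℕ → ℕ → FOS P Lab
  | edge : ℕ → ℕ → FOS P Lab
  | medge : ℕ → ℕ → FOS P Lab
  | le : ℕ → ℕ → FOS P Lab
  | inSet : ℕ → ℕ → FOS P Lab
  | or : FOS P Lab → FOS P Lab → FOS P Lab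
  | not : FOS P Lab → FOS P Lab
  | ex : ℕ → FOS P Lab → FOS P Lab

/-- Satisfaction, with a first-order valuation `ν` and a second-order valuation `σ`.
First-order quantification ranges over the events of the MSC. -/
def FOS.sat {P Lab : Type} (M : MSC P Lab) : FOS P Lab → (ℕ → ℕ) → (ℕ → Set ℕ) → Prop
  | .pred p x, ν, _ => M.loc (ν x) = p
  | .lab a x, ν, _ => M.lab (ν x) = a
  | .eq x y, ν, _ => ν x = ν y
  | .edge x y, ν, _ => M.proc (ν x) (ν y)
  | .medge x y, ν, _ => M.msg (ν x) (ν y)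
  | .le x y, ν, _ => M.hb (ν x) (ν y)
  | .inSet x k, ν, σ => ν x ∈ σ k
  | .or Φ Ψ, ν, σ => FOS.sat M Φ ν σ ∨ FOS.sat M Ψ ν σ
  | .not Φ, ν, σ => ¬ FOS.sat M Φ ν σ
  | .ex x Φ, ν, σ => ∃ e ∈ M.E, FOS.sat M Φ (Function.update ν x e) σ

/-- Free first-order variables. -/
def FOS.free {P Lab : Type} : FOS P Lab → Finset ℕ
  | .pred _ x => {x}
  | .lab _ x => {x}
  | .eq x y => {x, y}
  | .edge x y => {x, y}
  | .medge x y => {x, y}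
  | .le x y => {x, y}
  | .inSet x _ => {x}
  | .or Φ Ψ => FOS.free Φ ∪ FOS.free Ψ
  | .not Φ => FOS.free Φ
  | .ex x Φ => (FOS.free Φ).erase x

/-- All first-order variables occurring (free or bound). -/
def FOS.vars {P Lab : Type} : FOS P Lab → Finset ℕ
  | .pred _ x => {x}
  | .lab _ x => {x}
  | .eq x y => {x, y}
  | .edge x y => {x, y}
  | .medge x y => {x, y}
  | .le x y => {x, y}
  | .inSet x _ => {x}
  | .or Φ Ψ => FOS.vars Φ ∪ FOS.vars Ψ
  | .not Φ => FOS.vars Φ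
  | .ex x Φ => insert x (FOS.vars Φ)

/-- A formula is first-order (`FO[→,◁,≤]`) iff it contains no set atoms. -/
def FOS.noSets {P Lab : Type} : FOS P Lab → Prop
  | .pred _ _ => True
  | .lab _ _ => True
  | .eq _ _ => True
  | .edge _ _ => True
  | .medge _ _ => True
  | .le _ _ => True
  | .inSet _ _ => False
  | .or Φ Ψ => FOS.noSets Φ ∧ FOS.noSets Ψ
  | .not Φ => FOS.noSets Φ
  | .ex _ Φ => FOS.noSets Φ

/-! ## Communicating finite-state machines -/

/-- Actions of a process: internal `⟨a⟩`, send `!(a,m,q)`, receive `?(a,m,q)`. -/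
inductive CAct (P Lab Msg : Type) : Type where
  | int : Lab → CAct P Lab Msg
  | snd : Lab → Msg → P → CAct P Lab Msg
  | rcv : Lab → Msg → P → CAct P Lab Msg

/-- The label performed by an action. -/
def CAct.label {P Lab Msg : Type} : CAct P Lab Msg → Lab
  | .int a => a
  | .snd a _ _ => a
  | .rcv a _ _ => a

/-- A communicating finite-state machine over `P` and `Lab`. -/
structure CFM (P Lab : Type) where
  /-- states -/
  S : Type
  finS : Fintype S
  /-- messages -/
  Msg : Type
  finMsg : Fintype Msg
  /-- initial state of each process -/
  ι : P → S
  /-- transition relation of each process -/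
  Δ : P → S → CAct P Lab Msg → S → Prop
  Δ_snd : ∀ p s a m q s', Δ p s (.snd a m q) s' → q ≠ p
  Δ_rcv : ∀ p s a m q s', Δ p s (.rcv a m q) s' → q ≠ p
  /-- acceptance condition -/
  Acc : (P → S) → Prop

/-- Existence of an accepting run of a CFM on an MSC. -/
def CFM.Accepts {P Lab : Type} (A : CFM P Lab) (M : MSC P Lab) : Prop :=
  ∃ (src tgt : ℕ → A.S) (act : ℕ → CAct P Lab A.Msg),
    (∀ e ∈ M.E, A.Δ (M.loc e) (src e) (act e) (tgt e)) ∧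
    (∀ e ∈ M.E, (act e).label = M.lab e) ∧
    (∀ e ∈ M.E, (¬ ∃ f, M.proc f e) → src e = A.ι (M.loc e)) ∧
    (∀ e f, M.proc e f → tgt e = src f) ∧
    (∀ e ∈ M.E, (¬ ∃ f, M.msg e f) → (¬ ∃ f, M.msg f e) → ∃ a, act e = .int a) ∧
    (∀ e f, M.msg e f →
      ∃ a a' m, act e = .snd a m (M.loc f) ∧ act f = .rcv a' m (M.loc e)) ∧
    (∃ fin : P → A.S,
      (∀ p, (∀ e ∈ M.E, M.loc e ≠ p) → fin p = A.ι p) ∧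
      (∀ e ∈ M.E, (¬ ∃ f, M.proc e f) → fin (M.loc e) = tgt e) ∧
      A.Acc fin)

/-- The language of a CFM. -/
def CFM.lang {P Lab : Type} (A : CFM P Lab) : Set (MSC P Lab) := {M | A.Accepts M}

/-! ## Letter-to-letter MSC transducers -/

/-- The relation accepted by a letter-to-letter MSC transducer from `Lab` to `Γ`,
i.e., a CFM over `P` and `Lab × Γ`. -/
def Ltrans {P Lab Γ : Type} (A : CFM P (Lab × Γ)) (M : MSC P Lab) (N : MSC P Γ) : Prop :=
  ∃ γ : ℕ → Γ, N = M.relabel γ ∧ A.Accepts (M.relabel fun e => (M.lab e, γ e))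

/-- `M_φ` : the MSC over `Bool` obtained from `M` by labelling each event with
the truth value of the event formula `φ`. -/
noncomputable def MSC.evalEF {P Lab : Type} (M : MSC P Lab) (φ : EF P Lab) : MSC P Bool :=
  M.relabel fun e => @ite Bool (EF.sat M φ e) (Classical.propDecidable _) true false

/-! ## Boolean combinations -/

/-- Boolean combinations over atoms of type `α`. -/
inductive BC (α : Type) : Type where
  | atom : α → BC α
  | or : BC α → BC α → BC α
  | not : BC α → BC α

/-- Evaluation of a boolean combination given truth values of the atoms. -/
def BC.eval {α : Type} (v : α → Prop) : BC α → Prop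
  | .atom a => v a
  | .or b c => BC.eval v b ∨ BC.eval v c
  | .not b => ¬ BC.eval v b

/-- The atoms occurring in a boolean combination. -/
def BC.atoms {α : Type} : BC α → Set α
  | .atom a => {a}
  | .or b c => BC.atoms b ∪ BC.atoms c
  | .not b => BC.atoms b

/-! ## Bounded MSCs -/

/-- `r` is a linearization of `M`: a total order on the events containing
the happened-before relation. -/
def IsLinearization {P Lab : Type} (M : MSC P Lab) (r : ℕ → ℕ → Prop) : Prop :=
  (∀ e ∈ M.E, r e e) ∧
  (∀ e ∈ M.E, ∀ f ∈ M.E, r e f → r f e → e = f) ∧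
  (∀ e ∈ M.E, ∀ f ∈ M.E, ∀ g ∈ M.E, r e f → r f g → r e g) ∧
  (∀ e ∈ M.E, ∀ f ∈ M.E, r e f ∨ r f e) ∧
  (∀ e ∈ M.E, ∀ f ∈ M.E, M.hb e f → r e f)

/-- `r` is a `B`-bounded linearization of `M`: at any point, each channel
contains at most `B` pending messages. -/
def IsBBoundedLin {P Lab : Type} (M : MSC P Lab) (r : ℕ → ℕ → Prop) (B : ℕ) : Prop :=
  IsLinearization M r ∧
  ∀ g ∈ M.E, ∀ p q : P, p ≠ q →
    Set.ncard {ef : ℕ × ℕ | M.msg ef.1 ef.2 ∧ M.loc ef.1 = p ∧ M.loc ef.2 = q ∧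
      r ef.1 g ∧ ¬ r ef.2 g} ≤ B

/-- `M` is `∃B`-bounded: some linearization of `M` is `B`-bounded. -/
def ExistsBBounded {P Lab : Type} (M : MSC P Lab) (B : ℕ) : Prop :=
  ∃ r : ℕ → ℕ → Prop, IsBBoundedLin M r B

/-- `g` is a send event on channel `(p,q)`. -/
def isSendOn {P Lab : Type} (M : MSC P Lab) (p q : P) (g : ℕ) : Prop :=
  M.loc g = p ∧ ∃ h, M.msg g h ∧ M.loc h = q

/-- `revB M B f g` : `f` is a receive event with matching send `e` on some
channel `(p,q)`, and `g` is the `B`-th send on channel `(p,q)` strictly after `e`. -/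
def revB {P Lab : Type} (M : MSC P Lab) (B : ℕ) (f g : ℕ) : Prop :=
  ∃ e, M.msg e f ∧ isSendOn M (M.loc e) (M.loc f) g ∧ M.procLt e g ∧
    Set.ncard {g' | isSendOn M (M.loc e) (M.loc f) g' ∧ M.procLt e g' ∧ M.procLe g' g} = B

/-- `≤_B = (≤ ∪ rev_B)*`. -/
def leB {P Lab : Type} (M : MSC P Lab) (B : ℕ) : ℕ → ℕ → Prop :=
  Relation.ReflTransGen (fun a b => (M.proc a b ∨ M.msg a b) ∨ revB M B a b)

/-- `<_B`, the strict part of `≤_B`. -/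
def ltB {P Lab : Type} (M : MSC P Lab) (B : ℕ) (e f : ℕ) : Prop :=
  leB M B e f ∧ ¬ leB M B f e

/-- `e ∥_B f` : incomparable w.r.t. `≤_B`. -/
def parB {P Lab : Type} (M : MSC P Lab) (B : ℕ) (e f : ℕ) : Prop :=
  ¬ leB M B e f ∧ ¬ leB M B f e

/-- `↑_B e = {g : e ≤_B g}`. -/
def upB {P Lab : Type} (M : MSC P Lab) (B : ℕ) (e : ℕ) : Set ℕ :=
  {g | leB M B e g}

/-- The order `≺_B` (w.r.t. a fixed total order on `P`): `e ≺_B f` iff `e <_B f`, or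
`e ∥_B f` and the `⊑`-minimum of `loc(↑_B e \ ↑_B f)` is strictly below the
`⊑`-minimum of `loc(↑_B f \ ↑_B e)`. -/
def precB {P Lab : Type} [LinearOrder P] (M : MSC P Lab) (B : ℕ) (e f : ℕ) : Prop :=
  ltB M B e f ∨
    (parB M B e f ∧ ∃ p ∈ M.loc '' (upB M B e \ upB M B f),
      ∀ q ∈ M.loc '' (upB M B f \ upB M B e), p < q)
section Helpers

variable {P Lab : Type}

namespace MSC

lemma procLt_mem (M : MSC P Lab) {e f : ℕ} (h : M.procLt e f) : e ∈ M.E ∧ f ∈ M.E := by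
  induction h with
  | single h => exact M.proc_mem _ _ h
  | tail _ h ih => exact ⟨ih.1, (M.proc_mem _ _ h).2⟩

lemma procLt_loc (M : MSC P Lab) {e f : ℕ} (h : M.procLt e f) : M.loc e = M.loc f := by
  induction h with
  | single h => exact M.proc_loc _ _ h
  | tail _ h ih => exact ih.trans (M.proc_loc _ _ h)

lemma procLe_loc (M : MSC P Lab) {e f : ℕ} (h : M.procLe e f) : M.loc e = M.loc f := by
  rcases Relation.reflTransGen_iff_eq_or_transGen.mp h with rfl | h
  · rfl
  · exact M.procLt_loc h

lemma procLt_irrefl (M : MSC P Lab) {a : ℕ} (h : M.procLt a a) : False :=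
  M.acyclic a (by
    have key : ∀ {x y : ℕ}, M.procLt x y →
        Relation.TransGen (fun a b => M.proc a b ∨ M.msg a b) x y := by
      intro x y hxy
      induction hxy with
      | single hp => exact Relation.TransGen.single (Or.inl hp)
      | tail _ hp ih => exact ih.tail (Or.inl hp)
    exact key h)

lemma le_lt (M : MSC P Lab) {a b c : ℕ} (h1 : M.procLe a b) (h2 : M.procLt b c) :
    M.procLt a c := Relation.TransGen.trans_right h1 h2

lemma lt_le (M : MSC P Lab) {a b c : ℕ} (h1 : M.procLt a b) (h2 : M.procLe b c) :
    M.procLt a c := Relation.TransGen.trans_left h1 h2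

lemma le_lt_asymm (M : MSC P Lab) {a b : ℕ} (h1 : M.procLe a b) (h2 : M.procLt b a) : False :=
  M.procLt_irrefl (M.le_lt h1 h2)

lemma procLe_antisymm (M : MSC P Lab) {a b : ℕ} (h1 : M.procLe a b) (h2 : M.procLe b a) :
    a = b := by
  rcases Relation.reflTransGen_iff_eq_or_transGen.mp h2 with rfl | h2
  · rfl
  · exact absurd (M.le_lt h1 h2) M.procLt_irrefl

lemma procLe_total (M : MSC P Lab) {a b : ℕ} (ha : a ∈ M.E) (hb : b ∈ M.E)
    (hl : M.loc a = M.loc b) : M.procLe a b ∨ M.procLe b a := by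
  rcases M.proc_total a b ha hb hl with rfl | h | h
  · exact Or.inl Relation.ReflTransGen.refl
  · exact Or.inl h.to_reflTransGen
  · exact Or.inr h.to_reflTransGen

/-- the direct successor is unique -/
lemma proc_right_unique (M : MSC P Lab) {g f f' : ℕ} (h : M.proc g f) (h' : M.proc g f') :
    f = f' := by
  have hl : M.loc f = M.loc f' := (M.proc_loc _ _ h).symm.trans (M.proc_loc _ _ h')
  rcases M.proc_total f f' (M.proc_mem _ _ h).2 (M.proc_mem _ _ h').2 hl with rfl | hlt | hlt
  · rfl
  · exact absurd ⟨f, Relation.TransGen.single h, hlt⟩ (M.proc_cover g f' h')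
  · exact absurd ⟨f', Relation.TransGen.single h', hlt⟩ (M.proc_cover g f h)

/-- the direct predecessor is unique -/
lemma proc_left_unique (M : MSC P Lab) {g f f' : ℕ} (h : M.proc f g) (h' : M.proc f' g) :
    f = f' := by
  have hl : M.loc f = M.loc f' := (M.proc_loc _ _ h).trans (M.proc_loc _ _ h').symm
  rcases M.proc_total f f' (M.proc_mem _ _ h).1 (M.proc_mem _ _ h').1 hl with rfl | hlt | hlt
  · rfl
  · exact absurd ⟨f', hlt, Relation.TransGen.single h'⟩ (M.proc_cover f g h)
  · exact absurd ⟨f, hlt, Relation.TransGen.single h⟩ (M.proc_cover f' g h')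

lemma next_mono (M : MSC P Lab) {g g' f f' : ℕ} (hg : M.procLe g g')
    (h : M.proc g f) (h' : M.proc g' f') : M.procLe f f' := by
  rcases Relation.reflTransGen_iff_eq_or_transGen.mp hg with rfl | hlt
  · rw [M.proc_right_unique h h']
    exact Relation.ReflTransGen.refl
  · obtain ⟨c, hc, hcg⟩ := Relation.TransGen.head'_iff.mp hlt
    rw [M.proc_right_unique h hc]
    exact hcg.tail h'

lemma prev_mono (M : MSC P Lab) {g g' f f' : ℕ} (hg : M.procLe g g')
    (h : M.proc f g) (h' : M.proc f' g') : M.procLe f f' := by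
  have hl : M.loc f = M.loc f' :=
    ((M.proc_loc _ _ h).trans (M.procLe_loc hg)).trans (M.proc_loc _ _ h').symm
  rcases M.proc_total f f' (M.proc_mem _ _ h).1 (M.proc_mem _ _ h').1 hl with rfl | hlt | hlt
  · exact Relation.ReflTransGen.refl
  · exact hlt.to_reflTransGen
  · exfalso
    obtain ⟨c, hc, hcf⟩ := Relation.TransGen.head'_iff.mp hlt
    rw [M.proc_right_unique hc h'] at hcf
    -- g' ≤ f, proc f g, so g' < g; with g ≤ g', cycle
    exact M.le_lt_asymm hg (M.le_lt hcf (Relation.TransGen.single h))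

end MSC

mutual
theorem satMem (M : MSC P Lab) : ∀ (φ : EF P Lab) (e : ℕ), EF.sat M φ e → e ∈ M.E
  | .proc _, _, h => h.1
  | .lab _, _, h => h.1
  | .or φ ψ, e, h => h.elim (satMem M φ e) (satMem M ψ e)
  | .not _, _, h => h.1
  | .dia π _, e, h => (semMem M π e h.choose h.choose_spec.1).1
  | .loop π, e, h => (semMem M π e e h).1

theorem semMem (M : MSC P Lab) : ∀ (π : PF P Lab) (e f : ℕ),
    PF.sem M π e f → e ∈ M.E ∧ f ∈ M.E
  | .next, e, f, h => M.proc_mem e f h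
  | .prev, e, f, h => (M.proc_mem f e h).symm
  | .msg _ _, e, f, h => M.msg_mem e f h.1
  | .msgInv _ _, e, f, h => (M.msg_mem f e h.1).symm
  | .nextG _, _, _, h => M.procLt_mem h.1
  | .prevG _, _, _, h => (M.procLt_mem h.1).symm
  | .jump _ _, _, _, h => ⟨h.1, h.2.1⟩
  | .test φ, e, _, h => ⟨satMem M φ e h.2, h.1 ▸ satMem M φ e h.2⟩
  | .comp π₁ π₂, e, f, h =>
      ⟨(semMem M π₁ e h.choose h.choose_spec.1).1,
       (semMem M π₂ h.choose f h.choose_spec.2).2⟩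
  | .union π₁ π₂, e, f, h => h.elim (semMem M π₁ e f) (semMem M π₂ e f)
  | .inter π₁ _, e, f, h => semMem M π₁ e f h.1
  | .compl _, _, _, h => ⟨h.1, h.2.1⟩
end

end Helpers
section Core

variable {P Lab : Type}

/-- In the Loop fragment, the location of the target is determined by
the location of the source. -/
theorem semLoc (M : MSC P Lab) : ∀ (π : PF P Lab), PF.inFrag {PDLOp.loop} π →
    ∀ e f e' f', PF.sem M π e f → PF.sem M π e' f' → M.loc e = M.loc e' →
      M.loc f = M.loc f'
  | .next, _, e, f, e', f', h, h', hl => by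
      simp only [PF.sem] at h h'
      rw [← M.proc_loc _ _ h, ← M.proc_loc _ _ h', hl]
  | .prev, _, e, f, e', f', h, h', hl => by
      simp only [PF.sem] at h h'
      rw [M.proc_loc _ _ h, M.proc_loc _ _ h', hl]
  | .msg p q, _, e, f, e', f', h, h', _ => h.2.2.trans h'.2.2.symm
  | .msgInv p q, _, e, f, e', f', h, h', _ => h.2.1.trans h'.2.1.symm
  | .nextG φ, _, e, f, e', f', h, h', hl => by
      rw [← M.procLt_loc h.1, ← M.procLt_loc h'.1, hl]
  | .prevG φ, _, e, f, e', f', h, h', hl => by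
      rw [M.procLt_loc h.1, M.procLt_loc h'.1, hl]
  | .jump p r, _, e, f, e', f', h, h', _ => h.2.2.2.trans h'.2.2.2.symm
  | .test φ, _, e, f, e', f', h, h', hl => h.1 ▸ h'.1 ▸ hl
  | .comp π₁ π₂, hπ, e, f, e', f', h, h', hl => by
      obtain ⟨g, hg1, hg2⟩ := h
      obtain ⟨g', hg1', hg2'⟩ := h'
      exact semLoc M π₂ hπ.2 g f g' f' hg2 hg2'
        (semLoc M π₁ hπ.1 e g e' g' hg1 hg1' hl)
  | .union _ _, hπ, _, _, _, _, _, _, _ => by simp [PF.inFrag] at hπ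
  | .inter _ _, hπ, _, _, _, _, _, _, _ => by simp [PF.inFrag] at hπ
  | .compl _, hπ, _, _, _, _, _, _, _ => by simp [PF.inFrag] at hπ

/-- Cross-swap property, min version. -/
theorem cmin (M : MSC P Lab) : ∀ (π : PF P Lab), PF.inFrag {PDLOp.loop} π →
    ∀ g g' f f', M.procLe g g' → PF.sem M π g f → PF.sem M π g' f' →
      M.procLt f' f → PF.sem M π g f'
  | .next, _, g, g', f, f', hg, h, h', hlt => by
      simp only [PF.sem] at h h' ⊢
      exact absurd (M.next_mono hg h h') fun hle => M.le_lt_asymm hle hlt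
  | .prev, _, g, g', f, f', hg, h, h', hlt => by
      simp only [PF.sem] at h h' ⊢
      exact absurd (M.prev_mono hg h h') fun hle => M.le_lt_asymm hle hlt
  | .msg p q, _, g, g', f, f', hg, h, h', hlt => by
      have hle : M.procLe f f' :=
        (M.fifo g f g' f' h.1 h'.1 (h.2.1.trans h'.2.1.symm)
          (h.2.2.trans h'.2.2.symm)).mp hg
      exact absurd hle fun hle => M.le_lt_asymm hle hlt
  | .msgInv p q, _, g, g', f, f', hg, h, h', hlt => by
      have hle : M.procLe f f' :=
        (M.fifo f g f' g' h.1 h'.1 (h.2.1.trans h'.2.1.symm)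
          (M.procLe_loc hg)).mpr hg
      exact absurd hle fun hle => M.le_lt_asymm hle hlt
  | .nextG φ, _, g, g', f, f', hg, h, h', hlt => by
      refine ⟨M.le_lt hg h'.1, fun k hk1 hk2 => h.2 k hk1 (hk2.trans hlt)⟩
  | .prevG φ, _, g, g', f, f', hg, h, h', hlt => by
      refine ⟨hlt.trans h.1, fun k hk1 hk2 => h'.2 k hk1 (M.lt_le hk2 hg)⟩
  | .jump p r, _, g, g', f, f', hg, h, h', hlt =>
      ⟨h.1, h'.2.1, h.2.2.1, h'.2.2.2⟩
  | .test φ, _, g, g', f, f', hg, h, h', hlt => by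
      exact absurd hg fun hg => M.le_lt_asymm hg (h.1 ▸ h'.1 ▸ hlt)
  | .comp π₁ π₂, hπ, g, g', f, f', hg, h, h', hlt => by
      obtain ⟨m, h1, h2⟩ := h
      obtain ⟨m', h1', h2'⟩ := h'
      have hl : M.loc m = M.loc m' :=
        semLoc M π₁ hπ.1 g m g' m' h1 h1' (M.procLe_loc hg)
      rcases M.procLe_total (semMem M π₁ g m h1).2 (semMem M π₁ g' m' h1').2 hl
        with hmm | hmm
      · exact ⟨m, h1, cmin M π₂ hπ.2 m m' f f' hmm h2 h2' hlt⟩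
      · rcases Relation.reflTransGen_iff_eq_or_transGen.mp hmm with heq | hmm'
        · exact ⟨m, h1, heq ▸ h2'⟩
        · exact ⟨m', cmin M π₁ hπ.1 g g' m m' hg h1 h1' hmm', h2'⟩
  | .union _ _, hπ, _, _, _, _, _, _, _, _ => by simp [PF.inFrag] at hπ
  | .inter _ _, hπ, _, _, _, _, _, _, _, _ => by simp [PF.inFrag] at hπ
  | .compl _, hπ, _, _, _, _, _, _, _, _ => by simp [PF.inFrag] at hπ

/-- Cross-swap property, max version. -/
theorem cmax (M : MSC P Lab) : ∀ (π : PF P Lab), PF.inFrag {PDLOp.loop} π →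
    ∀ g g' f f', M.procLe g g' → PF.sem M π g f → PF.sem M π g' f' →
      M.procLt f' f → PF.sem M π g' f
  | .next, _, g, g', f, f', hg, h, h', hlt => by
      simp only [PF.sem] at h h' ⊢
      exact absurd (M.next_mono hg h h') fun hle => M.le_lt_asymm hle hlt
  | .prev, _, g, g', f, f', hg, h, h', hlt => by
      simp only [PF.sem] at h h' ⊢
      exact absurd (M.prev_mono hg h h') fun hle => M.le_lt_asymm hle hlt
  | .msg p q, _, g, g', f, f', hg, h, h', hlt => by
      have hle : M.procLe f f' :=
        (M.fifo g f g' f' h.1 h'.1 (h.2.1.trans h'.2.1.symm)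
          (h.2.2.trans h'.2.2.symm)).mp hg
      exact absurd hle fun hle => M.le_lt_asymm hle hlt
  | .msgInv p q, _, g, g', f, f', hg, h, h', hlt => by
      have hle : M.procLe f f' :=
        (M.fifo f g f' g' h.1 h'.1 (h.2.1.trans h'.2.1.symm)
          (M.procLe_loc hg)).mpr hg
      exact absurd hle fun hle => M.le_lt_asymm hle hlt
  | .nextG φ, _, g, g', f, f', hg, h, h', hlt => by
      refine ⟨h'.1.trans hlt, fun k hk1 hk2 => h.2 k (M.le_lt hg hk1) hk2⟩
  | .prevG φ, _, g, g', f, f', hg, h, h', hlt => by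
      refine ⟨M.lt_le h.1 hg, fun k hk1 hk2 => ?_⟩
      -- k with f <+ k <+ g' ; f' <+ f so f' <+ k, use h'.2
      exact h'.2 k (hlt.trans hk1) hk2
  | .jump p r, _, g, g', f, f', hg, h, h', hlt =>
      ⟨h'.1, h.2.1, h'.2.2.1, h.2.2.2⟩
  | .test φ, _, g, g', f, f', hg, h, h', hlt => by
      exact absurd hg fun hg => M.le_lt_asymm hg (h.1 ▸ h'.1 ▸ hlt)
  | .comp π₁ π₂, hπ, g, g', f, f', hg, h, h', hlt => by
      obtain ⟨m, h1, h2⟩ := h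
      obtain ⟨m', h1', h2'⟩ := h'
      have hl : M.loc m = M.loc m' :=
        semLoc M π₁ hπ.1 g m g' m' h1 h1' (M.procLe_loc hg)
      rcases M.procLe_total (semMem M π₁ g m h1).2 (semMem M π₁ g' m' h1').2 hl
        with hmm | hmm
      · exact ⟨m', h1', cmax M π₂ hπ.2 m m' f f' hmm h2 h2' hlt⟩
      · rcases Relation.reflTransGen_iff_eq_or_transGen.mp hmm with heq | hmm'
        · exact ⟨m', h1', heq ▸ h2⟩
        · exact ⟨m, cmax M π₁ hπ.1 g g' m m' hg h1 h1' hmm', h2⟩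
  | .union _ _, hπ, _, _, _, _, _, _, _, _ => by simp [PF.inFrag] at hπ
  | .inter _ _, hπ, _, _, _, _, _, _, _, _ => by simp [PF.inFrag] at hπ
  | .compl _, hπ, _, _, _, _, _, _, _, _ => by simp [PF.inFrag] at hπ

/-- A finite nonempty set that is totally preordered by `r` has an `r`-least element. -/
lemma finset_exists_min (r : ℕ → ℕ → Prop) (htr : ∀ {a b c}, r a b → r b c → r a c) :
    ∀ (s : Finset ℕ), (∀ a ∈ s, ∀ b ∈ s, r a b ∨ r b a) → s.Nonempty →
      ∃ m ∈ s, ∀ x ∈ s, r m x := by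
  intro s
  induction s using Finset.induction_on with
  | empty => intro _ h; exact absurd h (by simp)
  | @insert a t ha ih =>
    intro htot _
    rcases t.eq_empty_or_nonempty with rfl | hte
    · refine ⟨a, Finset.mem_insert_self a _, fun x hx => ?_⟩
      simp only [Finset.mem_insert, Finset.notMem_empty, or_false] at hx
      subst hx
      exact (htot x (Finset.mem_insert_self x _) x (Finset.mem_insert_self x _)).elim id id
    · obtain ⟨m, hm, hmin⟩ := ih
        (fun x hx y hy => htot x (Finset.mem_insert_of_mem hx) y (Finset.mem_insert_of_mem hy))
        hte
      have hma := htot a (Finset.mem_insert_self a _) m (Finset.mem_insert_of_mem hm)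
      rcases hma with ham | hma
      · refine ⟨a, Finset.mem_insert_self a _, fun x hx => ?_⟩
        rcases Finset.mem_insert.mp hx with rfl | hx
        · exact (htot x (Finset.mem_insert_self x _) x (Finset.mem_insert_self x _)).elim id id
        · exact htr ham (hmin x hx)
      · refine ⟨m, Finset.mem_insert_of_mem hm, fun x hx => ?_⟩
        rcases Finset.mem_insert.mp hx with rfl | hx
        · exact hma
        · exact hmin x hx

end Core

/-- For `PDLsf[Loop]` path formulas `π₁, π₂` and an event `e`
with `⟦π₁·π₂⟧(e) ≠ ∅`:
`min_{π₁·π₂}(e) = min_{π₂}(min_{π₁·(⟨π₂⟩true)?}(e))` and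
`max_{π₁·π₂}(e) = max_{π₂}(max_{π₁·(⟨π₂⟩true)?}(e))`,
where `tt` is a tautological event formula. -/
theorem min_max_comp {P Lab : Type} [Fintype P] [Nonempty P] [Fintype Lab] [Nonempty Lab]
    (π₁ π₂ : PF P Lab)
    (h1 : PF.inFrag {PDLOp.loop} π₁) (h2 : PF.inFrag {PDLOp.loop} π₂)
    (tt : EF P Lab) (htt : EF.inFrag {PDLOp.loop} tt)
    (httSem : ∀ (M : MSC P Lab) (e : ℕ), EF.sat M tt e ↔ e ∈ M.E)
    (M : MSC P Lab) (e : ℕ) (hne : ∃ f, PF.sem M (PF.comp π₁ π₂) e f) :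
    (∀ m, isMinOf M (PF.comp π₁ π₂) e m ↔
      ∃ m₁, isMinOf M (PF.comp π₁ (PF.test (EF.dia π₂ tt))) e m₁ ∧
        isMinOf M π₂ m₁ m) ∧
    (∀ m, isMaxOf M (PF.comp π₁ π₂) e m ↔
      ∃ m₁, isMaxOf M (PF.comp π₁ (PF.test (EF.dia π₂ tt))) e m₁ ∧
        isMaxOf M π₂ m₁ m) := by
  classical
  obtain ⟨f₀, hf₀⟩ := hne
  simp only [PF.sem] at hf₀
  obtain ⟨g₀, hg₀1, hg₀2⟩ := hf₀
  set Bp : ℕ → Prop := fun g => PF.sem M π₁ e g ∧ ∃ f, PF.sem M π₂ g f with hBpdef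
  have hBiff : ∀ g, PF.sem M (PF.comp π₁ (PF.test (EF.dia π₂ tt))) e g ↔ Bp g := by
    intro g
    simp only [PF.sem, EF.sat, hBpdef]
    constructor
    · rintro ⟨h, h1, rfl, f, hf, -⟩
      exact ⟨h1, f, hf⟩
    · rintro ⟨h1, f, hf⟩
      exact ⟨g, h1, rfl, f, hf, (httSem M f).mpr (semMem M π₂ g f hf).2⟩
  have hBmem : ∀ g, Bp g → g ∈ M.E := fun g hg => (semMem M π₁ e g hg.1).2
  have hBloc : ∀ g g', Bp g → Bp g' → M.loc g = M.loc g' := fun g g' hg hg' =>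
    semLoc M π₁ h1 e g e g' hg.1 hg'.1 rfl
  set s : Finset ℕ := M.E.filter (fun g => Bp g) with hsdef
  have hsmem : ∀ g, g ∈ s ↔ Bp g := by
    intro g
    simp only [hsdef, Finset.mem_filter]
    exact ⟨fun h => h.2, fun h => ⟨hBmem g h, h⟩⟩
  have hstot : ∀ a ∈ s, ∀ b ∈ s, M.procLe a b ∨ M.procLe b a := fun a ha b hb =>
    M.procLe_total (hBmem a ((hsmem a).mp ha)) (hBmem b ((hsmem b).mp hb))
      (hBloc a b ((hsmem a).mp ha) ((hsmem b).mp hb))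
  have hsne : s.Nonempty := ⟨g₀, (hsmem g₀).mpr ⟨hg₀1, f₀, hg₀2⟩⟩
  -- least and greatest elements of B
  obtain ⟨m₁, hm₁s, hm₁min⟩ :=
    finset_exists_min M.procLe (fun h1 h2 => h1.trans h2) s hstot hsne
  obtain ⟨m₂, hm₂s, hm₂max⟩ :=
    finset_exists_min (fun a b => M.procLe b a) (fun h1 h2 => h2.trans h1) s
      (fun a ha b hb => (hstot b hb a ha)) hsne
  have hBm₁ : Bp m₁ := (hsmem m₁).mp hm₁s
  have hBm₂ : Bp m₂ := (hsmem m₂).mp hm₂s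
  have hm₁min' : ∀ g, Bp g → M.procLe m₁ g := fun g hg => hm₁min g ((hsmem g).mpr hg)
  have hm₂max' : ∀ g, Bp g → M.procLe g m₂ := fun g hg => hm₂max g ((hsmem g).mpr hg)
  -- least element of the π₂-image of m₁
  set t₁ : Finset ℕ := M.E.filter (fun f => PF.sem M π₂ m₁ f) with ht₁def
  have ht₁mem : ∀ f, f ∈ t₁ ↔ PF.sem M π₂ m₁ f := by
    intro f
    simp only [ht₁def, Finset.mem_filter]
    exact ⟨fun h => h.2, fun h => ⟨(semMem M π₂ m₁ f h).2, h⟩⟩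
  obtain ⟨n₁, hn₁t, hn₁min⟩ :=
    finset_exists_min M.procLe (fun h1 h2 => h1.trans h2) t₁
      (fun a ha b hb =>
        M.procLe_total ((Finset.mem_filter.mp ha).1) ((Finset.mem_filter.mp hb).1)
          (semLoc M π₂ h2 m₁ a m₁ b ((ht₁mem a).mp ha) ((ht₁mem b).mp hb) rfl))
      (by obtain ⟨f, hf⟩ := hBm₁.2; exact ⟨f, (ht₁mem f).mpr hf⟩)
  have hn₁sem : PF.sem M π₂ m₁ n₁ := (ht₁mem n₁).mp hn₁t
  have hn₁min' : ∀ f, PF.sem M π₂ m₁ f → M.procLe n₁ f := fun f hf =>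
    hn₁min f ((ht₁mem f).mpr hf)
  -- greatest element of the π₂-image of m₂
  set t₂ : Finset ℕ := M.E.filter (fun f => PF.sem M π₂ m₂ f) with ht₂def
  have ht₂mem : ∀ f, f ∈ t₂ ↔ PF.sem M π₂ m₂ f := by
    intro f
    simp only [ht₂def, Finset.mem_filter]
    exact ⟨fun h => h.2, fun h => ⟨(semMem M π₂ m₂ f h).2, h⟩⟩
  obtain ⟨n₂, hn₂t, hn₂max⟩ :=
    finset_exists_min (fun a b => M.procLe b a) (fun h1 h2 => h2.trans h1) t₂
      (fun a ha b hb =>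
        (M.procLe_total ((Finset.mem_filter.mp hb).1) ((Finset.mem_filter.mp ha).1)
          (semLoc M π₂ h2 m₂ b m₂ a ((ht₂mem b).mp hb) ((ht₂mem a).mp ha) rfl)))
      (by obtain ⟨f, hf⟩ := hBm₂.2; exact ⟨f, (ht₂mem f).mpr hf⟩)
  have hn₂sem : PF.sem M π₂ m₂ n₂ := (ht₂mem n₂).mp hn₂t
  have hn₂max' : ∀ f, PF.sem M π₂ m₂ f → M.procLe f n₂ := fun f hf =>
    hn₂max f ((ht₂mem f).mpr hf)
  -- the key facts
  have F1min : isMinOf M (PF.comp π₁ (PF.test (EF.dia π₂ tt))) e m₁ :=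
    ⟨(hBiff m₁).mpr hBm₁, fun f hf => hm₁min' f ((hBiff f).mp hf)⟩
  have F1max : isMaxOf M (PF.comp π₁ (PF.test (EF.dia π₂ tt))) e m₂ :=
    ⟨(hBiff m₂).mpr hBm₂, fun f hf => hm₂max' f ((hBiff f).mp hf)⟩
  have F2min : isMinOf M π₂ m₁ n₁ := ⟨hn₁sem, hn₁min'⟩
  have F2max : isMaxOf M π₂ m₂ n₂ := ⟨hn₂sem, hn₂max'⟩
  have F3min : isMinOf M (PF.comp π₁ π₂) e n₁ := by
    refine ⟨⟨m₁, hBm₁.1, hn₁sem⟩, fun f hf => ?_⟩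
    obtain ⟨g, hg1, hg2⟩ := hf
    have hBg : Bp g := ⟨hg1, f, hg2⟩
    have hle : M.procLe m₁ g := hm₁min' g hBg
    have hloc : M.loc n₁ = M.loc f :=
      semLoc M π₂ h2 m₁ n₁ g f hn₁sem hg2 (hBloc m₁ g hBm₁ hBg)
    rcases M.procLe_total (semMem M π₂ m₁ n₁ hn₁sem).2 (semMem M π₂ g f hg2).2 hloc
      with h | h
    · exact h
    · rcases Relation.reflTransGen_iff_eq_or_transGen.mp h with heq | hlt
      · exact heq ▸ Relation.ReflTransGen.refl
      · exact hn₁min' f (cmin M π₂ h2 m₁ g n₁ f hle hn₁sem hg2 hlt)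
  have F3max : isMaxOf M (PF.comp π₁ π₂) e n₂ := by
    refine ⟨⟨m₂, hBm₂.1, hn₂sem⟩, fun f hf => ?_⟩
    obtain ⟨g, hg1, hg2⟩ := hf
    have hBg : Bp g := ⟨hg1, f, hg2⟩
    have hle : M.procLe g m₂ := hm₂max' g hBg
    have hloc : M.loc f = M.loc n₂ :=
      semLoc M π₂ h2 g f m₂ n₂ hg2 hn₂sem (hBloc g m₂ hBg hBm₂)
    rcases M.procLe_total (semMem M π₂ g f hg2).2 (semMem M π₂ m₂ n₂ hn₂sem).2 hloc
      with h | h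
    · exact h
    · rcases Relation.reflTransGen_iff_eq_or_transGen.mp h with heq | hlt
      · exact heq ▸ Relation.ReflTransGen.refl
      · exact hn₂max' f (cmax M π₂ h2 g m₂ f n₂ hle hg2 hn₂sem hlt)
  constructor
  · intro m
    constructor
    · intro hm
      have hmn : m = n₁ := M.procLe_antisymm (hm.2 n₁ F3min.1) (F3min.2 m hm.1)
      exact ⟨m₁, F1min, hmn ▸ F2min⟩
    · rintro ⟨m₁', hmin₁', hmin₂'⟩
      have hm₁eq : m₁' = m₁ :=
        M.procLe_antisymm (hmin₁'.2 m₁ F1min.1) (F1min.2 m₁' hmin₁'.1)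
      subst hm₁eq
      have hmn : m = n₁ := M.procLe_antisymm (hmin₂'.2 n₁ F2min.1) (F2min.2 m hmin₂'.1)
      exact hmn ▸ F3min
  · intro m
    constructor
    · intro hm
      have hmn : m = n₂ := M.procLe_antisymm (F3max.2 m hm.1) (hm.2 n₂ F3max.1)
      exact ⟨m₂, F1max, hmn ▸ F2max⟩
    · rintro ⟨m₂', hmax₁', hmax₂'⟩
      have hm₂eq : m₂' = m₂ :=
        M.procLe_antisymm (F1max.2 m₂' hmax₁'.1) (hmax₁'.2 m₂ F1max.1)
      subst hm₂eq
      have hmn : m = n₂ := M.procLe_antisymm (F2max.2 m hmax₂'.1) (hmax₂'.2 n₂ F2max.1)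
      exact hmn ▸ F3max
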